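/- Suppose c, p : Fin 3 × Fin 3 → ZMod n with pairwise distinct indices i, j, k satisfy the alignment equations: c i i + p j i = c i j + p k j = c i k + p j k; c i i + p k i = c i j + p j j = c i k + p k k; c j i + p k i = c j j + p k j = c j k + p i k; c j i + p i i = c j k + p k k; c k i + p i i = c k j + p j j = c k k + p i k. Then c i j + c k i + c j k = c j i + c i k + c k j in ZMod n (constraint (i)). -/
import Mathlib


theorem constraint_i_of_alignment (n : ℕ) (c p : Fin 3 × Fin 3 → ZMod n)
    (i j k : Fin 3) (hij : i ≠ j) (hjk : j ≠ k) (hik : i ≠ k)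
    (h15a : c (i, i) + p (j, i) = c (i, j) + p (k, j))
    (h15b : c (i, j) + p (k, j) = c (i, k) + p (j, k))
    (h16a : c (i, i) + p (k, i) = c (i, j) + p (j, j))
    (h16b : c (i, j) + p (j, j) = c (i, k) + p (k, k))
    (h17a : c (j, i) + p (k, i) = c (j, j) + p (k, j))
    (h17b : c (j, j) + p (k, j) = c (j, k) + p (i, k))
    (h18 : c (j, i) + p (i, i) = c (j, k) + p (k, k))
    (h20a : c (k, i) + p (i, i) = c (k, j) + p (j, j))
    (h20b : c (k, j) + p (j, j) = c (k, k) + p (i, k)) :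
    c (i, j) + c (k, i) + c (j, k) = c (j, i) + c (i, k) + c (k, j) := by
  linear_combination h16b + h20a - h18
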